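/- Let A be a 3 × 3 complex Hermitian matrix (A_{ji} = conj(A_{ij})) with A_{11} ≠ 0 and A_{22} ≠ 0. Then the equality det A = A_{11} · (A_{22} − A_{12}·A_{21}/A_{11}) · (A_{33} − A_{23}·A_{32}/A_{22}) holds if and only if A_{12}·A_{23} = A_{13}·A_{22}. -/

import Mathlib

/-- **The 3×3 determinant comparison in the proof of Theorem 6.**
For a Hermitian `3 × 3` matrix with `A₁₁ ≠ 0` and `A₂₂ ≠ 0` (1-indexed), the equality
`det A = A₁₁ (A₂₂ - A₁₂A₂₁/A₁₁)(A₃₃ - A₂₃A₃₂/A₂₂)` holds iff `A₁₂A₂₃ = A₁₃A₂₂`. -/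
theorem det_three_by_three_renewal_iff
    (A : Matrix (Fin 3) (Fin 3) ℂ)
    (hherm : ∀ i j, A j i = (starRingEnd ℂ) (A i j))
    (h0 : A 0 0 ≠ 0) (h1 : A 1 1 ≠ 0) :
    A.det = A 0 0 * (A 1 1 - A 0 1 * A 1 0 / A 0 0) * (A 2 2 - A 1 2 * A 2 1 / A 1 1)
      ↔ A 0 1 * A 1 2 = A 0 2 * A 1 1 := by
  have hb : (starRingEnd ℂ) (A 1 1) = A 1 1 := (hherm 1 1).symm
  set z : ℂ := A 0 1 * A 1 2 - A 0 2 * A 1 1 with hz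
  have iden : A.det - (A 0 0 * (A 1 1 - A 0 1 * A 1 0 / A 0 0) * (A 2 2 - A 1 2 * A 2 1 / A 1 1))
      = -(z * (starRingEnd ℂ) z) / A 1 1 := by
    rw [Matrix.det_fin_three, hherm 0 1, hherm 0 2, hherm 1 2, hz]
    simp only [map_sub, map_mul, hb]
    field_simp
    ring
  constructor
  · intro h
    have hzz : z * (starRingEnd ℂ) z = 0 := by
      have := iden
      rw [h, sub_self] at this
      field_simp at this
      linear_combination this
    have : z = 0 := by
      rcases mul_eq_zero.mp hzz with h' | h'
      · exact h'
      · simpa using h'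
    exact sub_eq_zero.mp this
  · intro h
    have hz0 : z = 0 := by rw [hz, h, sub_self]
    have := iden
    rw [hz0] at this
    simp at this
    exact sub_eq_zero.mp this
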